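/- arXiv:1209.3678 — 3 statements merged into one kernel-verified Lean document; each statement's English description precedes it below -/
import Mathlib

section
/- The Laplace transform L, defined by (Lφ)(ρ) = ∫₀^∞ e^{-ρσ} φ(σ) dσ, is a bounded self-adjoint operator on L²((0,∞)) with operator norm √π, and L² = H where H is the operator with kernel 1/(ρ+σ). -/
open MeasureTheory Filter Set Topology

noncomputable section

/-- The Hankel-type operator with kernel `1/(ρ+σ)` on the half-line. -/
def Hankel (φ : ℝ → ℂ) (ρ : ℝ) : ℂ := ∫ σ in Ioi (0:ℝ), φ σ / (↑ρ + ↑σ)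

/-- The Laplace transform on the half-line. -/
def LaplaceT (φ : ℝ → ℂ) (ρ : ℝ) : ℂ := ∫ σ in Ioi (0:ℝ), (Real.exp (-(ρ * σ)) : ℂ) * φ σ

open Real
open scoped ENNReal NNReal


lemma sqrtinv_eq_rpow {t : ℝ} (ht : 0 ≤ t) : (Real.sqrt t)⁻¹ = t ^ (-(1/2) : ℝ) := by
  rw [Real.sqrt_eq_rpow, ← Real.rpow_neg ht]

lemma lap_integrableOn {r : ℝ} (hr : 0 < r) :
    IntegrableOn (fun t : ℝ => (Real.sqrt t)⁻¹ * Real.exp (-(r * t))) (Ioi 0) := by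
  have h := integrableOn_rpow_mul_exp_neg_mul_rpow (p := 1) (s := -(1/2)) (by norm_num) one_pos hr
  simp only [Real.rpow_one] at h
  apply h.congr_fun _ measurableSet_Ioi
  intro t ht
  simp only
  rw [sqrtinv_eq_rpow (le_of_lt (ht : (0:ℝ) < t)), neg_mul]

lemma lap_integral {r : ℝ} (hr : 0 < r) :
    ∫ t in Ioi (0:ℝ), (Real.sqrt t)⁻¹ * Real.exp (-(r * t)) = Real.sqrt π / Real.sqrt r := by
  rw [setIntegral_congr_fun measurableSet_Ioi
    (fun t ht => by rw [sqrtinv_eq_rpow (le_of_lt (ht : (0:ℝ) < t))])]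
  have h := Real.integral_rpow_mul_exp_neg_mul_Ioi (a := 1/2) (by norm_num) hr
  rw [show (1/2 - 1 : ℝ) = -(1/2) by norm_num] at h
  rw [h, Real.Gamma_one_half_eq, ← Real.sqrt_eq_rpow, div_eq_mul_inv, mul_comm, one_mul, Real.sqrt_inv, div_eq_mul_inv]

lemma lap_lintegral {r : ℝ} (hr : 0 < r) :
    ∫⁻ t in Ioi (0:ℝ), ENNReal.ofReal ((Real.sqrt t)⁻¹ * Real.exp (-(r * t)))
      = ENNReal.ofReal (Real.sqrt π / Real.sqrt r) := by
  rw [← lap_integral hr, ← ofReal_integral_eq_lintegral_ofReal (lap_integrableOn hr)]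
  filter_upwards [ae_restrict_mem measurableSet_Ioi] with t ht
  positivity

lemma exp_integrableOn {r : ℝ} (hr : 0 < r) :
    IntegrableOn (fun t : ℝ => Real.exp (-(r * t))) (Ioi 0) := by
  have h := integrableOn_rpow_mul_exp_neg_mul_rpow (p := 1) (s := 0) (by norm_num) one_pos hr
  simp only [Real.rpow_one, Real.rpow_zero, one_mul, neg_mul] at h
  exact h

lemma exp_integral {r : ℝ} (hr : 0 < r) :
    ∫ t in Ioi (0:ℝ), Real.exp (-(r * t)) = 1 / r := by
  have h := Real.integral_rpow_mul_exp_neg_mul_Ioi (a := 1) (by norm_num) hr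
  simp only [sub_self, Real.rpow_zero, one_mul, Real.rpow_one, Real.Gamma_one, mul_one] at h
  exact h

lemma exp_lintegral {r : ℝ} (hr : 0 < r) :
    ∫⁻ t in Ioi (0:ℝ), ENNReal.ofReal (Real.exp (-(r * t))) = ENNReal.ofReal (1 / r) := by
  rw [← exp_integral hr, ← ofReal_integral_eq_lintegral_ofReal (exp_integrableOn hr)]
  exact ae_of_all _ fun t => (Real.exp_pos _).le

lemma two_conj : Real.HolderConjugate 2 2 := Real.HolderConjugate.two_two

lemma lint_CS {α : Type*} [MeasurableSpace α] {μ : Measure α} (f g : α → ℝ≥0∞)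
    (hf : AEMeasurable f μ) (hg : AEMeasurable g μ) :
    ∫⁻ x, f x * g x ∂μ ≤
      (∫⁻ x, f x ^ (2:ℝ) ∂μ) ^ ((1:ℝ)/2) * (∫⁻ x, g x ^ (2:ℝ) ∂μ) ^ ((1:ℝ)/2) := by
  simpa using ENNReal.lintegral_mul_le_Lp_mul_Lq μ two_conj hf hg

lemma sq_sqrt_ofReal {x : ℝ} (hx : 0 ≤ x) :
    ENNReal.ofReal (Real.sqrt x) ^ (2:ℝ) = ENNReal.ofReal x := by
  rw [ENNReal.ofReal_rpow_of_nonneg (Real.sqrt_nonneg x) (by norm_num)]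
  congr 1
  rw [show (2:ℝ) = ((2:ℕ):ℝ) by norm_num, Real.rpow_natCast, sq, Real.mul_self_sqrt hx]

lemma schur_pointwise (f : ℝ → ℝ≥0∞) (hf : Measurable f) {ρ : ℝ} (hρ : 0 < ρ) :
    (∫⁻ σ in Ioi (0:ℝ), ENNReal.ofReal (Real.exp (-(ρ * σ))) * f σ) ^ (2:ℝ)
      ≤ ENNReal.ofReal (Real.sqrt π / Real.sqrt ρ) *
        ∫⁻ σ in Ioi (0:ℝ), ENNReal.ofReal (Real.sqrt σ * Real.exp (-(ρ * σ))) * (f σ) ^ (2:ℝ) := by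
  set g : ℝ → ℝ≥0∞ := fun σ => ENNReal.ofReal (Real.sqrt ((Real.sqrt σ)⁻¹ * Real.exp (-(ρ * σ))))
  set h : ℝ → ℝ≥0∞ := fun σ =>
    ENNReal.ofReal (Real.sqrt (Real.sqrt σ * Real.exp (-(ρ * σ)))) * f σ
  have hg : Measurable g := by fun_prop
  have hh : Measurable h := by fun_prop
  have key : ∫⁻ σ in Ioi (0:ℝ), ENNReal.ofReal (Real.exp (-(ρ * σ))) * f σ
      = ∫⁻ σ in Ioi (0:ℝ), g σ * h σ := by
    refine setLIntegral_congr_fun measurableSet_Ioi (fun σ hσ => ?_)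
    have hσ0 : (0:ℝ) < σ := hσ
    have h1 : (0:ℝ) ≤ (Real.sqrt σ)⁻¹ * Real.exp (-(ρ * σ)) := by positivity
    rw [show g σ * h σ = (g σ * ENNReal.ofReal (Real.sqrt (Real.sqrt σ * Real.exp (-(ρ * σ))))) * f σ
        by rw [mul_assoc]]
    congr 1
    rw [show g σ = ENNReal.ofReal (Real.sqrt ((Real.sqrt σ)⁻¹ * Real.exp (-(ρ * σ)))) from rfl,
      ← ENNReal.ofReal_mul (Real.sqrt_nonneg _), ← Real.sqrt_mul h1]
    congr 1
    rw [show (Real.sqrt σ)⁻¹ * Real.exp (-(ρ * σ)) * (Real.sqrt σ * Real.exp (-(ρ * σ)))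
        = ((Real.sqrt σ)⁻¹ * Real.sqrt σ) * (Real.exp (-(ρ * σ)) * Real.exp (-(ρ * σ))) by ring,
      inv_mul_cancel₀ (ne_of_gt (Real.sqrt_pos.mpr hσ0)), one_mul,
      Real.sqrt_mul_self (Real.exp_nonneg _)]
  have CS := lint_CS (μ := volume.restrict (Ioi 0)) g h hg.aemeasurable hh.aemeasurable
  have hg2 : ∫⁻ σ in Ioi (0:ℝ), g σ ^ (2:ℝ) = ENNReal.ofReal (Real.sqrt π / Real.sqrt ρ) := by
    rw [← lap_lintegral hρ]
    refine setLIntegral_congr_fun measurableSet_Ioi (fun σ hσ => ?_)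
    exact sq_sqrt_ofReal (by positivity)
  have hh2 : ∫⁻ σ in Ioi (0:ℝ), h σ ^ (2:ℝ)
      = ∫⁻ σ in Ioi (0:ℝ), ENNReal.ofReal (Real.sqrt σ * Real.exp (-(ρ * σ))) * (f σ) ^ (2:ℝ) := by
    refine setLIntegral_congr_fun measurableSet_Ioi (fun σ hσ => ?_)
    rw [show h σ = ENNReal.ofReal (Real.sqrt (Real.sqrt σ * Real.exp (-(ρ * σ)))) * f σ from rfl,
      ENNReal.mul_rpow_of_nonneg _ _ (by norm_num : (0:ℝ) ≤ 2),
      sq_sqrt_ofReal (by positivity)]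
  calc (∫⁻ σ in Ioi (0:ℝ), ENNReal.ofReal (Real.exp (-(ρ * σ))) * f σ) ^ (2:ℝ)
      ≤ ((∫⁻ σ in Ioi (0:ℝ), g σ ^ (2:ℝ)) ^ ((1:ℝ)/2)
          * (∫⁻ σ in Ioi (0:ℝ), h σ ^ (2:ℝ)) ^ ((1:ℝ)/2)) ^ (2:ℝ) := by
        rw [key]; exact ENNReal.rpow_le_rpow CS (by norm_num)
    _ = (∫⁻ σ in Ioi (0:ℝ), g σ ^ (2:ℝ)) * ∫⁻ σ in Ioi (0:ℝ), h σ ^ (2:ℝ) := by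
        rw [ENNReal.mul_rpow_of_nonneg _ _ (by norm_num : (0:ℝ) ≤ 2),
          ← ENNReal.rpow_mul, ← ENNReal.rpow_mul]
        norm_num
    _ = _ := by rw [hg2, hh2]

lemma schur_bound (f : ℝ → ℝ≥0∞) (hf : Measurable f) :
    ∫⁻ ρ in Ioi (0:ℝ), (∫⁻ σ in Ioi (0:ℝ), ENNReal.ofReal (Real.exp (-(ρ * σ))) * f σ) ^ (2:ℝ)
      ≤ ENNReal.ofReal π * ∫⁻ σ in Ioi (0:ℝ), (f σ) ^ (2:ℝ) := by
  have step1 : ∫⁻ ρ in Ioi (0:ℝ),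
      (∫⁻ σ in Ioi (0:ℝ), ENNReal.ofReal (Real.exp (-(ρ * σ))) * f σ) ^ (2:ℝ)
      ≤ ∫⁻ ρ in Ioi (0:ℝ), ENNReal.ofReal (Real.sqrt π / Real.sqrt ρ) *
          ∫⁻ σ in Ioi (0:ℝ), ENNReal.ofReal (Real.sqrt σ * Real.exp (-(ρ * σ))) * (f σ) ^ (2:ℝ) := by
    refine lintegral_mono_ae ?_
    filter_upwards [ae_restrict_mem measurableSet_Ioi] with ρ hρ
    exact schur_pointwise f hf hρ
  have swap : ∫⁻ ρ in Ioi (0:ℝ), ∫⁻ σ in Ioi (0:ℝ),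
        ENNReal.ofReal ((Real.sqrt ρ)⁻¹) *
          (ENNReal.ofReal (Real.sqrt σ * Real.exp (-(ρ * σ))) * (f σ) ^ (2:ℝ))
      = ∫⁻ σ in Ioi (0:ℝ), ∫⁻ ρ in Ioi (0:ℝ),
        ENNReal.ofReal ((Real.sqrt ρ)⁻¹) *
          (ENNReal.ofReal (Real.sqrt σ * Real.exp (-(ρ * σ))) * (f σ) ^ (2:ℝ)) := by
    refine lintegral_lintegral_swap ?_
    apply Measurable.aemeasurable
    fun_prop
  have inner_eq : ∀ σ ∈ Ioi (0:ℝ), (∫⁻ ρ in Ioi (0:ℝ),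
        ENNReal.ofReal ((Real.sqrt ρ)⁻¹) *
          (ENNReal.ofReal (Real.sqrt σ * Real.exp (-(ρ * σ))) * (f σ) ^ (2:ℝ)))
      = ENNReal.ofReal (Real.sqrt π) * (f σ) ^ (2:ℝ) := by
    intro σ hσ
    have hσ0 : (0:ℝ) < σ := hσ
    have hpt : ∀ ρ : ℝ, ENNReal.ofReal ((Real.sqrt ρ)⁻¹) *
          (ENNReal.ofReal (Real.sqrt σ * Real.exp (-(ρ * σ))) * (f σ) ^ (2:ℝ))
        = (ENNReal.ofReal (Real.sqrt σ) * (f σ) ^ (2:ℝ)) *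
            ENNReal.ofReal ((Real.sqrt ρ)⁻¹ * Real.exp (-(σ * ρ))) := by
      intro ρ
      rw [ENNReal.ofReal_mul (Real.sqrt_nonneg σ),
        ENNReal.ofReal_mul (by positivity : (0:ℝ) ≤ (Real.sqrt ρ)⁻¹), mul_comm σ ρ]
      ring
    simp only [hpt]
    rw [lintegral_const_mul _ (show Measurable fun ρ : ℝ =>
        ENNReal.ofReal ((Real.sqrt ρ)⁻¹ * Real.exp (-(σ * ρ))) by fun_prop),
      lap_lintegral hσ0]
    have hs : Real.sqrt σ * (Real.sqrt π / Real.sqrt σ) = Real.sqrt π := by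
      field_simp
    rw [mul_comm (ENNReal.ofReal (Real.sqrt σ)) ((f σ) ^ (2:ℝ)), mul_assoc,
      ← ENNReal.ofReal_mul (Real.sqrt_nonneg _), hs, mul_comm]
  calc ∫⁻ ρ in Ioi (0:ℝ),
      (∫⁻ σ in Ioi (0:ℝ), ENNReal.ofReal (Real.exp (-(ρ * σ))) * f σ) ^ (2:ℝ)
      ≤ ∫⁻ ρ in Ioi (0:ℝ), ENNReal.ofReal (Real.sqrt π / Real.sqrt ρ) *
          ∫⁻ σ in Ioi (0:ℝ), ENNReal.ofReal (Real.sqrt σ * Real.exp (-(ρ * σ))) * (f σ) ^ (2:ℝ) :=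
        step1
    _ = ENNReal.ofReal (Real.sqrt π) * ∫⁻ ρ in Ioi (0:ℝ), ∫⁻ σ in Ioi (0:ℝ),
          ENNReal.ofReal ((Real.sqrt ρ)⁻¹) *
            (ENNReal.ofReal (Real.sqrt σ * Real.exp (-(ρ * σ))) * (f σ) ^ (2:ℝ)) := by
        rw [← lintegral_const_mul' _ _ (by finiteness)]
        refine lintegral_congr fun ρ => ?_
        rw [div_eq_mul_inv, ENNReal.ofReal_mul (Real.sqrt_nonneg _), mul_assoc]
        congr 1
        rw [← lintegral_const_mul' _ _ (by finiteness)]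
    _ = ENNReal.ofReal (Real.sqrt π) * ∫⁻ σ in Ioi (0:ℝ),
          ENNReal.ofReal (Real.sqrt π) * (f σ) ^ (2:ℝ) := by
        rw [swap]
        congr 1
        exact setLIntegral_congr_fun measurableSet_Ioi inner_eq
    _ = ENNReal.ofReal π * ∫⁻ σ in Ioi (0:ℝ), (f σ) ^ (2:ℝ) := by
        rw [lintegral_const_mul' _ _ (by finiteness), ← mul_assoc,
          ← ENNReal.ofReal_mul (Real.sqrt_nonneg _), Real.mul_self_sqrt Real.pi_pos.le]

lemma lap_enorm_le (φ : ℝ → ℂ) (ρ : ℝ) :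
    (‖LaplaceT φ ρ‖₊ : ℝ≥0∞) ≤
      ∫⁻ σ in Ioi (0:ℝ), ENNReal.ofReal (Real.exp (-(ρ * σ))) * (‖φ σ‖₊ : ℝ≥0∞) := by
  refine le_trans (enorm_integral_le_lintegral_enorm _) (le_of_eq ?_)
  refine lintegral_congr fun σ => ?_
  rw [enorm_eq_nnnorm, nnnorm_mul, ENNReal.coe_mul, Complex.nnnorm_real,
    ← enorm_eq_nnnorm (Real.exp (-(ρ * σ))), Real.enorm_eq_ofReal (Real.exp_nonneg _)]

lemma lap_aesm {φ : ℝ → ℂ} (hφ : AEStronglyMeasurable φ (volume.restrict (Ioi 0))) :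
    AEStronglyMeasurable (LaplaceT φ) (volume.restrict (Ioi 0)) := by
  have hk : Continuous fun p : ℝ × ℝ => (Real.exp (-(p.1 * p.2)) : ℂ) := by fun_prop
  have h2 : AEStronglyMeasurable (fun p : ℝ × ℝ => (Real.exp (-(p.1 * p.2)) : ℂ) * φ p.2)
      ((volume.restrict (Ioi (0:ℝ))).prod (volume.restrict (Ioi (0:ℝ)))) :=
    hk.aestronglyMeasurable.mul hφ.comp_snd
  exact h2.integral_prod_right'

lemma eLpNorm_two (f : ℝ → ℂ) (μ : Measure ℝ) :
    eLpNorm f 2 μ = (∫⁻ x, (‖f x‖₊ : ℝ≥0∞) ^ (2:ℝ) ∂μ) ^ ((1:ℝ)/2) := by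
  rw [eLpNorm_eq_lintegral_rpow_enorm_toReal (by norm_num) (by norm_num)]
  norm_num
  simp only [enorm_eq_nnnorm]

lemma lap_bound {φ : ℝ → ℂ} (hφ : MemLp φ 2 (volume.restrict (Ioi 0))) :
    MemLp (LaplaceT φ) 2 (volume.restrict (Ioi 0)) ∧
    eLpNorm (LaplaceT φ) 2 (volume.restrict (Ioi 0)) ≤
      ENNReal.ofReal (Real.sqrt π) * eLpNorm φ 2 (volume.restrict (Ioi 0)) := by
  obtain ⟨hsm, hfin⟩ := hφ
  have hae := hsm.enorm
  set g : ℝ → ℝ≥0∞ := hae.mk _ with hgdef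
  have hgmeas : Measurable g := hae.measurable_mk
  have hgeq : (fun x => (‖φ x‖₊ : ℝ≥0∞)) =ᵐ[volume.restrict (Ioi 0)] g := hae.ae_eq_mk
  have h1 : ∀ ρ : ℝ, (‖LaplaceT φ ρ‖₊ : ℝ≥0∞)
      ≤ ∫⁻ σ in Ioi (0:ℝ), ENNReal.ofReal (Real.exp (-(ρ * σ))) * g σ := by
    intro ρ
    refine (lap_enorm_le φ ρ).trans (le_of_eq (lintegral_congr_ae ?_))
    filter_upwards [hgeq] with σ hσ
    rw [hσ]
  have h4 : ∫⁻ σ in Ioi (0:ℝ), (g σ) ^ (2:ℝ)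
      = ∫⁻ σ in Ioi (0:ℝ), (‖φ σ‖₊ : ℝ≥0∞) ^ (2:ℝ) := by
    refine lintegral_congr_ae ?_
    filter_upwards [hgeq] with σ hσ
    rw [hσ]
  have key : ∫⁻ ρ in Ioi (0:ℝ), (‖LaplaceT φ ρ‖₊ : ℝ≥0∞) ^ (2:ℝ)
      ≤ ENNReal.ofReal π * ∫⁻ σ in Ioi (0:ℝ), (‖φ σ‖₊ : ℝ≥0∞) ^ (2:ℝ) := by
    rw [← h4]
    refine le_trans (lintegral_mono fun ρ => ENNReal.rpow_le_rpow (h1 ρ) (by norm_num))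
      (schur_bound g hgmeas)
  have bound : eLpNorm (LaplaceT φ) 2 (volume.restrict (Ioi 0))
      ≤ ENNReal.ofReal (Real.sqrt π) * eLpNorm φ 2 (volume.restrict (Ioi 0)) := by
    rw [eLpNorm_two, eLpNorm_two]
    calc (∫⁻ ρ in Ioi (0:ℝ), (‖LaplaceT φ ρ‖₊ : ℝ≥0∞) ^ (2:ℝ)) ^ ((1:ℝ)/2)
        ≤ (ENNReal.ofReal π * ∫⁻ σ in Ioi (0:ℝ), (‖φ σ‖₊ : ℝ≥0∞) ^ (2:ℝ)) ^ ((1:ℝ)/2) :=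
          ENNReal.rpow_le_rpow key (by norm_num)
      _ = ENNReal.ofReal (Real.sqrt π) *
            (∫⁻ σ in Ioi (0:ℝ), (‖φ σ‖₊ : ℝ≥0∞) ^ (2:ℝ)) ^ ((1:ℝ)/2) := by
          rw [ENNReal.mul_rpow_of_nonneg _ _ (by norm_num : (0:ℝ) ≤ 1/2),
            ENNReal.ofReal_rpow_of_nonneg Real.pi_pos.le (by norm_num),
            ← Real.sqrt_eq_rpow]
  refine ⟨⟨lap_aesm hsm, lt_of_le_of_lt bound ?_⟩, bound⟩
  exact ENNReal.mul_lt_top ENNReal.ofReal_lt_top hfin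

lemma lint_sq_fin {φ : ℝ → ℂ} (hφ : MemLp φ 2 (volume.restrict (Ioi 0))) :
    ∫⁻ σ in Ioi (0:ℝ), (‖φ σ‖₊ : ℝ≥0∞) ^ (2:ℝ) < ⊤ := by
  have := hφ.2
  rw [eLpNorm_two] at this
  exact (ENNReal.rpow_lt_top_iff_of_pos (by norm_num : (0:ℝ) < 1/2)).mp this

lemma lap_selfadj {φ ψ : ℝ → ℂ} (hφ : MemLp φ 2 (volume.restrict (Ioi 0)))
    (hψ : MemLp ψ 2 (volume.restrict (Ioi 0))) :
    (∫ ρ in Ioi (0:ℝ), LaplaceT φ ρ * (starRingEnd ℂ) (ψ ρ)) =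
      ∫ ρ in Ioi (0:ℝ), φ ρ * (starRingEnd ℂ) (LaplaceT ψ ρ) := by
  set μ := volume.restrict (Ioi (0:ℝ)) with hμ
  set F : ℝ → ℝ → ℂ := fun ρ σ => (Real.exp (-(ρ * σ)) : ℂ) * φ σ * (starRingEnd ℂ) (ψ ρ)
    with hF
  have hk : Continuous fun p : ℝ × ℝ => (Real.exp (-(p.1 * p.2)) : ℂ) := by fun_prop
  have hFm : AEStronglyMeasurable (Function.uncurry F) (μ.prod μ) := by
    exact (hk.aestronglyMeasurable.mul hφ.1.comp_snd).mul
      (Complex.continuous_conj.comp_aestronglyMeasurable hψ.1.comp_fst)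
  -- measurable representatives
  obtain ⟨g, hgmeas, hgeq⟩ : ∃ g : ℝ → ℝ≥0∞, Measurable g ∧
      (fun x => (‖φ x‖₊ : ℝ≥0∞)) =ᵐ[μ] g :=
    ⟨hφ.1.enorm.mk _, hφ.1.enorm.measurable_mk, hφ.1.enorm.ae_eq_mk⟩
  obtain ⟨h, hhmeas, hheq⟩ : ∃ h : ℝ → ℝ≥0∞, Measurable h ∧
      (fun x => (‖ψ x‖₊ : ℝ≥0∞)) =ᵐ[μ] h :=
    ⟨hψ.1.enorm.mk _, hψ.1.enorm.measurable_mk, hψ.1.enorm.ae_eq_mk⟩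
  have hgsq : ∫⁻ σ, g σ ^ (2:ℝ) ∂μ < ⊤ := by
    refine lt_of_eq_of_lt (lintegral_congr_ae ?_) (lint_sq_fin hφ)
    filter_upwards [hgeq] with σ hσ; rw [hσ]
  have hhsq : ∫⁻ σ, h σ ^ (2:ℝ) ∂μ < ⊤ := by
    refine lt_of_eq_of_lt (lintegral_congr_ae ?_) (lint_sq_fin hψ)
    filter_upwards [hheq] with σ hσ; rw [hσ]
  have hJmeas : Measurable fun ρ => ∫⁻ σ, ENNReal.ofReal (Real.exp (-(ρ * σ))) * g σ ∂μ := by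
    apply Measurable.lintegral_prod_right (f := fun ρ σ => ENNReal.ofReal (Real.exp (-(ρ * σ))) * g σ)
    fun_prop
  have hFint : Integrable (Function.uncurry F) (μ.prod μ) := by
    refine ⟨hFm, ?_⟩
    show ∫⁻ p, (‖Function.uncurry F p‖₊ : ℝ≥0∞) ∂(μ.prod μ) < ⊤
    have heq : ∫⁻ p, ‖Function.uncurry F p‖₊ ∂(μ.prod μ)
        = ∫⁻ ρ, (∫⁻ σ, ENNReal.ofReal (Real.exp (-(ρ * σ))) * g σ ∂μ) * h ρ ∂μ := by
      rw [lintegral_prod (fun p => (‖Function.uncurry F p‖₊ : ℝ≥0∞)) hFm.enorm]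
      refine lintegral_congr_ae ?_
      filter_upwards [hheq] with ρ hρ
      rw [← hρ]
      rw [show ∀ q : ℝ≥0∞, q * (‖ψ ρ‖₊ : ℝ≥0∞) = q * (‖ψ ρ‖₊ : ℝ≥0∞) from fun _ => rfl]
      rw [← lintegral_mul_const' _ _ (by finiteness)]
      refine lintegral_congr_ae ?_
      filter_upwards [hgeq] with σ hσ
      simp only [Function.uncurry, hF, nnnorm_mul, ENNReal.coe_mul, Complex.nnnorm_real,
        fun x => (enorm_eq_nnnorm (Real.exp x)).symm.trans (Real.enorm_eq_ofReal (Real.exp_nonneg x))]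
      rw [show (‖(starRingEnd ℂ) (ψ ρ)‖₊ : ℝ≥0∞) = (‖ψ ρ‖₊ : ℝ≥0∞) by rw [RCLike.nnnorm_conj]]
      rw [← hσ]
    rw [heq]
    calc ∫⁻ ρ, (∫⁻ σ, ENNReal.ofReal (Real.exp (-(ρ * σ))) * g σ ∂μ) * h ρ ∂μ
        ≤ (∫⁻ ρ, (∫⁻ σ, ENNReal.ofReal (Real.exp (-(ρ * σ))) * g σ ∂μ) ^ (2:ℝ) ∂μ) ^ ((1:ℝ)/2)
            * (∫⁻ ρ, h ρ ^ (2:ℝ) ∂μ) ^ ((1:ℝ)/2) :=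
          lint_CS _ _ hJmeas.aemeasurable hhmeas.aemeasurable
      _ < ⊤ := by
          apply ENNReal.mul_lt_top
          · refine (ENNReal.rpow_lt_top_iff_of_pos (by norm_num)).mpr ?_
            exact lt_of_le_of_lt (schur_bound g hgmeas) (ENNReal.mul_lt_top ENNReal.ofReal_lt_top hgsq)
          · exact (ENNReal.rpow_lt_top_iff_of_pos (by norm_num)).mpr hhsq
  have hswap := integral_integral_swap hFint
  calc ∫ ρ in Ioi (0:ℝ), LaplaceT φ ρ * (starRingEnd ℂ) (ψ ρ)
      = ∫ ρ, ∫ σ, F ρ σ ∂μ ∂μ := by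
        refine integral_congr_ae (ae_of_all _ fun ρ => ?_)
        simp only [hF, LaplaceT]
        rw [← integral_mul_const]
    _ = ∫ σ, ∫ ρ, F ρ σ ∂μ ∂μ := hswap
    _ = ∫ ρ in Ioi (0:ℝ), φ ρ * (starRingEnd ℂ) (LaplaceT ψ ρ) := by
        refine integral_congr_ae (ae_of_all _ fun σ => ?_)
        simp only [hF, LaplaceT]
        rw [← integral_conj, ← integral_const_mul]
        refine integral_congr_ae (ae_of_all _ fun ρ => ?_)
        simp only [hF, map_mul, Complex.conj_ofReal]
        rw [mul_comm σ ρ]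
        ring

lemma lap_sq_eq_hankel {φ : ℝ → ℂ} (hφ : MemLp φ 2 (volume.restrict (Ioi 0)))
    {ρ : ℝ} (hρ : 0 < ρ) : LaplaceT (LaplaceT φ) ρ = Hankel φ ρ := by
  set μ := volume.restrict (Ioi (0:ℝ)) with hμ
  set F : ℝ → ℝ → ℂ := fun τ σ => (Real.exp (-(ρ * τ)) : ℂ) * ((Real.exp (-(τ * σ)) : ℂ) * φ σ)
    with hF
  obtain ⟨g, hgmeas, hgeq⟩ : ∃ g : ℝ → ℝ≥0∞, Measurable g ∧
      (fun x => (‖φ x‖₊ : ℝ≥0∞)) =ᵐ[μ] g :=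
    ⟨hφ.1.enorm.mk _, hφ.1.enorm.measurable_mk, hφ.1.enorm.ae_eq_mk⟩
  have hgsq : ∫⁻ σ, g σ ^ (2:ℝ) ∂μ < ⊤ := by
    refine lt_of_eq_of_lt (lintegral_congr_ae ?_) (lint_sq_fin hφ)
    filter_upwards [hgeq] with σ hσ; rw [hσ]
  set B : ℝ≥0∞ := (∫⁻ σ, g σ ^ (2:ℝ) ∂μ) ^ ((1:ℝ)/2) with hB
  have hBfin : B < ⊤ := (ENNReal.rpow_lt_top_iff_of_pos (by norm_num)).mpr hgsq
  have hFm : AEStronglyMeasurable (Function.uncurry F) (μ.prod μ) := by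
    have c1 : Continuous fun p : ℝ × ℝ => (Real.exp (-(ρ * p.1)) : ℂ) := by fun_prop
    have c2 : Continuous fun p : ℝ × ℝ => (Real.exp (-(p.1 * p.2)) : ℂ) := by fun_prop
    exact c1.aestronglyMeasurable.mul (c2.aestronglyMeasurable.mul hφ.1.comp_snd)
  have hFint : Integrable (Function.uncurry F) (μ.prod μ) := by
    refine ⟨hFm, ?_⟩
    show ∫⁻ p, (‖Function.uncurry F p‖₊ : ℝ≥0∞) ∂(μ.prod μ) < ⊤
    have heq : ∫⁻ p, (‖Function.uncurry F p‖₊ : ℝ≥0∞) ∂(μ.prod μ)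
        = ∫⁻ τ, ENNReal.ofReal (Real.exp (-(ρ * τ))) *
            ∫⁻ σ, ENNReal.ofReal (Real.exp (-(τ * σ))) * g σ ∂μ ∂μ := by
      rw [lintegral_prod (fun p => (‖Function.uncurry F p‖₊ : ℝ≥0∞)) hFm.enorm]
      refine lintegral_congr fun τ => ?_
      rw [← lintegral_const_mul' _ _ (by finiteness)]
      refine lintegral_congr_ae ?_
      filter_upwards [hgeq] with σ hσ
      simp only [Function.uncurry, hF, nnnorm_mul, ENNReal.coe_mul, Complex.nnnorm_real,
        fun x => (enorm_eq_nnnorm (Real.exp x)).symm.trans (Real.enorm_eq_ofReal (Real.exp_nonneg x))]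
      rw [← hσ]
    rw [heq]
    have hJle : ∀ τ : ℝ, 0 < τ → ∫⁻ σ, ENNReal.ofReal (Real.exp (-(τ * σ))) * g σ ∂μ
        ≤ ENNReal.ofReal ((Real.sqrt 2)⁻¹ * (Real.sqrt τ)⁻¹) * B := by
      intro τ hτ
      have CS := lint_CS (μ := μ) _ _
        (show Measurable fun σ : ℝ => ENNReal.ofReal (Real.exp (-(τ * σ))) by fun_prop).aemeasurable
        hgmeas.aemeasurable
      refine le_trans CS ?_
      rw [← hB]
      refine mul_le_mul_left (le_of_eq ?_) B
      have : ∫⁻ σ, ENNReal.ofReal (Real.exp (-(τ * σ))) ^ (2:ℝ) ∂μ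
          = ENNReal.ofReal (1 / (2 * τ)) := by
        rw [← exp_lintegral (by linarith : (0:ℝ) < 2 * τ)]
        refine lintegral_congr fun σ => ?_
        rw [ENNReal.ofReal_rpow_of_nonneg (Real.exp_nonneg _) (by norm_num)]
        rw [← Real.exp_mul]
        congr 1
        ring
      rw [this, ENNReal.ofReal_rpow_of_nonneg (by positivity) (by norm_num),
        ← Real.sqrt_eq_rpow, one_div, Real.sqrt_inv, Real.sqrt_mul (by norm_num), mul_inv]
    calc ∫⁻ τ, ENNReal.ofReal (Real.exp (-(ρ * τ))) *
            ∫⁻ σ, ENNReal.ofReal (Real.exp (-(τ * σ))) * g σ ∂μ ∂μ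
        ≤ ∫⁻ τ, ENNReal.ofReal ((Real.sqrt 2)⁻¹) * B *
            ENNReal.ofReal ((Real.sqrt τ)⁻¹ * Real.exp (-(ρ * τ))) ∂μ := by
          refine lintegral_mono_ae ?_
          filter_upwards [ae_restrict_mem measurableSet_Ioi] with τ hτ
          refine le_trans (mul_le_mul_right (hJle τ hτ) _) (le_of_eq ?_)
          rw [ENNReal.ofReal_mul (by positivity), ENNReal.ofReal_mul (by positivity)]
          ring
      _ < ⊤ := by
          rw [lintegral_const_mul' _ _ (by finiteness), lap_lintegral hρ]
          exact ENNReal.mul_lt_top (ENNReal.mul_lt_top ENNReal.ofReal_lt_top hBfin)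
            ENNReal.ofReal_lt_top
  have hswap := integral_integral_swap hFint
  calc LaplaceT (LaplaceT φ) ρ = ∫ τ, ∫ σ, F τ σ ∂μ ∂μ := by
        simp only [LaplaceT, hF]
        refine integral_congr_ae (ae_of_all _ fun τ => ?_)
        dsimp only
        rw [← integral_const_mul]
    _ = ∫ σ, ∫ τ, F τ σ ∂μ ∂μ := hswap
    _ = Hankel φ ρ := by
        rw [Hankel, hμ]
        refine setIntegral_congr_fun measurableSet_Ioi fun σ hσ => ?_
        have hσ0 : (0:ℝ) < σ := hσ
        have hcomb : ∀ τ : ℝ, F τ σ = ((Real.exp (-((ρ + σ) * τ)) : ℝ) : ℂ) * φ σ := by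
          intro τ
          simp only [hF]
          rw [← mul_assoc, ← Complex.ofReal_mul, ← Real.exp_add]
          congr 2
          ring
        simp only [hcomb]
        rw [integral_mul_const]
        have hval : (∫ a in Ioi (0:ℝ), ((Real.exp (-((ρ + σ) * a)) : ℝ) : ℂ))
            = ((1/(ρ+σ) : ℝ) : ℂ) := by
          rw [← exp_integral (show (0:ℝ) < ρ + σ by linarith)]
          exact integral_ofReal
        rw [hval, div_eq_mul_inv]
        push_cast
        ring

def gfun (u : ℝ) : ℝ := (Real.sqrt u)⁻¹ * Real.exp (-u)

lemma gfun_nonneg (u : ℝ) : 0 ≤ gfun u := by unfold gfun; positivity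

lemma gfun_int : IntegrableOn gfun (Ioi 0) := by
  have h := lap_integrableOn one_pos
  simp only [one_mul] at h
  exact h

lemma gfun_integral : ∫ u in Ioi (0:ℝ), gfun u = Real.sqrt π := by
  have h := lap_integral one_pos
  simp only [one_mul, Real.sqrt_one, div_one] at h
  exact h

lemma exists_M {ε : ℝ} (hε : 0 < ε) :
    ∃ M : ℝ, 2 ≤ M ∧ Real.sqrt π - ε < ∫ u in Ioc (M⁻¹) M, gfun u := by
  set s : ℕ → Set ℝ := fun n => Ioc ((n:ℝ)+2)⁻¹ ((n:ℝ)+2) with hs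
  have hsm : ∀ n, MeasurableSet (s n) := fun n => measurableSet_Ioc
  have hmono : Monotone s := by
    intro n m hnm
    have h1 : ((n:ℝ)+2) ≤ ((m:ℝ)+2) := by
      have : (n:ℝ) ≤ m := Nat.cast_le.mpr hnm
      linarith
    exact Ioc_subset_Ioc (inv_anti₀ (by positivity) h1) h1
  have hunion : ⋃ n, s n = Ioi (0:ℝ) := by
    ext x
    simp only [hs, mem_iUnion, mem_Ioc, mem_Ioi]
    constructor
    · rintro ⟨n, h1, h2⟩
      exact lt_trans (by positivity) h1
    · intro hx
      obtain ⟨n, hn⟩ := exists_nat_ge (max x x⁻¹)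
      refine ⟨n, ?_, by linarith [le_trans (le_max_left x x⁻¹) hn]⟩
      have h2 : x⁻¹ < (n:ℝ)+2 := by linarith [le_trans (le_max_right x x⁻¹) hn]
      have h3 : (0:ℝ) < (n:ℝ)+2 := by positivity
      have h4 : (1:ℝ) < x * ((n:ℝ)+2) := by
        calc (1:ℝ) = x * x⁻¹ := (mul_inv_cancel₀ (ne_of_gt hx)).symm
          _ < x * ((n:ℝ)+2) := mul_lt_mul_of_pos_left h2 hx
      rw [inv_lt_iff_one_lt_mul₀' h3]
      linarith [mul_comm x ((n:ℝ)+2)]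
  have htend := tendsto_setIntegral_of_monotone hsm hmono (by rw [hunion]; exact gfun_int)
  rw [hunion, gfun_integral] at htend
  have hmem : Ioi (Real.sqrt π - ε) ∈ 𝓝 (Real.sqrt π) := Ioi_mem_nhds (by linarith)
  obtain ⟨n, hn⟩ := (htend.eventually hmem).exists
  exact ⟨(n:ℝ)+2, by linarith [(Nat.cast_nonneg n : (0:ℝ) ≤ n)], hn⟩

def phiN (N : ℝ) : ℝ → ℂ := fun σ => (((Ioo (N⁻¹) N).indicator (fun σ => (Real.sqrt σ)⁻¹) σ : ℝ) : ℂ)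

lemma sq_sqrtinv_ofReal {x : ℝ} (hx : 0 ≤ x) :
    ENNReal.ofReal ((Real.sqrt x)⁻¹) ^ (2:ℝ) = ENNReal.ofReal x⁻¹ := by
  rw [ENNReal.ofReal_rpow_of_nonneg (by positivity) (by norm_num)]
  congr 1
  rw [show (2:ℝ) = ((2:ℕ):ℝ) by norm_num, Real.rpow_natCast, sq, ← mul_inv,
    Real.mul_self_sqrt hx]

lemma phiN_enorm_sq {N : ℝ} (hN : 1 < N) (σ : ℝ) :
    (‖phiN N σ‖₊ : ℝ≥0∞) ^ (2:ℝ)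
      = (Ioo (N⁻¹) N).indicator (fun σ => ENNReal.ofReal σ⁻¹) σ := by
  by_cases h : σ ∈ Ioo (N⁻¹) N
  · have hσ : (0:ℝ) < σ := lt_trans (by positivity) h.1
    rw [phiN, indicator_of_mem h, indicator_of_mem h, Complex.nnnorm_real,
      ← enorm_eq_nnnorm, Real.enorm_eq_ofReal (by positivity)]
    exact sq_sqrtinv_ofReal hσ.le
  · rw [phiN, indicator_of_notMem h, indicator_of_notMem h]
    simp

lemma inv_integrableOn_Ioo {a b : ℝ} (ha : 0 < a) :
    IntegrableOn (fun σ : ℝ => σ⁻¹) (Ioo a b) := by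
  rcases le_or_gt b a with h | h
  · rw [Ioo_eq_empty (by exact fun hlt => absurd h (not_le.mpr hlt))]
    exact integrableOn_empty
  · have hc : ContinuousOn (fun σ : ℝ => σ⁻¹) (Icc a b) :=
      ContinuousOn.inv₀ continuousOn_id fun x hx => ne_of_gt (lt_of_lt_of_le ha hx.1)
    exact (hc.integrableOn_Icc).mono_set Ioo_subset_Icc_self

lemma integral_inv_Ioo {N : ℝ} (hN : 1 < N) :
    ∫ σ in Ioo (N⁻¹) N, σ⁻¹ = 2 * Real.log N := by
  have h0 : (0:ℝ) < N⁻¹ := by positivity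
  have hinv1 : N⁻¹ ≤ 1 := by
    nlinarith [mul_inv_cancel₀ (show N ≠ 0 by linarith)]
  have hle : N⁻¹ ≤ N := by linarith
  rw [← integral_Ioc_eq_integral_Ioo, ← intervalIntegral.integral_of_le hle,
    integral_inv (notMem_uIcc_of_lt h0 (by linarith)), div_eq_mul_inv, inv_inv,
    Real.log_mul (by linarith) (by linarith)]
  ring

lemma phiN_meas (N : ℝ) : AEStronglyMeasurable (phiN N) (volume.restrict (Ioi 0)) := by
  apply Measurable.aestronglyMeasurable
  exact Complex.measurable_ofReal.comp
    ((Measurable.inv (by fun_prop)).indicator measurableSet_Ioo)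

lemma phiN_lint {N : ℝ} (hN : 1 < N) :
    ∫⁻ σ in Ioi (0:ℝ), (‖phiN N σ‖₊ : ℝ≥0∞) ^ (2:ℝ) = ENNReal.ofReal (2 * Real.log N) := by
  have h0 : (0:ℝ) < N⁻¹ := by positivity
  calc ∫⁻ σ in Ioi (0:ℝ), (‖phiN N σ‖₊ : ℝ≥0∞) ^ (2:ℝ)
      = ∫⁻ σ in Ioi (0:ℝ), (Ioo (N⁻¹) N).indicator (fun σ => ENNReal.ofReal σ⁻¹) σ :=
        lintegral_congr fun σ => phiN_enorm_sq hN σ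
    _ = ∫⁻ σ in Ioo (N⁻¹) N, ENNReal.ofReal σ⁻¹ := by
        rw [lintegral_indicator measurableSet_Ioo, Measure.restrict_restrict measurableSet_Ioo,
          (show Ioo (N⁻¹) N ∩ Ioi 0 = Ioo (N⁻¹) N from
            inter_eq_left.mpr fun x hx => lt_trans h0 hx.1)]
    _ = ENNReal.ofReal (2 * Real.log N) := by
        rw [← integral_inv_Ioo hN,
          ← ofReal_integral_eq_lintegral_ofReal (inv_integrableOn_Ioo h0) ?_]
        filter_upwards [ae_restrict_mem measurableSet_Ioo] with σ hσ
        have : (0:ℝ) < σ := lt_trans h0 hσ.1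
        positivity

lemma phiN_memLp {N : ℝ} (hN : 1 < N) : MemLp (phiN N) 2 (volume.restrict (Ioi 0)) := by
  refine ⟨phiN_meas N, ?_⟩
  rw [eLpNorm_two, phiN_lint hN]
  exact (ENNReal.rpow_lt_top_iff_of_pos (by norm_num)).mpr ENNReal.ofReal_lt_top

lemma phiN_eLp {N : ℝ} (hN : 1 < N) :
    eLpNorm (phiN N) 2 (volume.restrict (Ioi 0))
      = ENNReal.ofReal (Real.sqrt (2 * Real.log N)) := by
  have : (0:ℝ) ≤ 2 * Real.log N := by
    have := Real.log_nonneg hN.le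
    linarith
  rw [eLpNorm_two, phiN_lint hN, ENNReal.ofReal_rpow_of_nonneg this (by norm_num),
    ← Real.sqrt_eq_rpow]

lemma subst_lemma {ρ a b : ℝ} (hρ : 0 < ρ) (ha : 0 < a) (hab : a ≤ b) :
    ∫ σ in a..b, (Real.sqrt σ)⁻¹ * Real.exp (-(ρ * σ))
      = (Real.sqrt ρ)⁻¹ * ∫ u in (ρ*a)..(ρ*b), gfun u := by
  have hsρ : Real.sqrt ρ ≠ 0 := ne_of_gt (Real.sqrt_pos.mpr hρ)
  have h1 : ∫ σ in a..b, (Real.sqrt σ)⁻¹ * Real.exp (-(ρ * σ))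
      = ∫ σ in a..b, Real.sqrt ρ * gfun (ρ * σ) := by
    refine intervalIntegral.integral_congr fun σ hσ => ?_
    rw [uIcc_of_le hab] at hσ
    have hσ0 : 0 < σ := lt_of_lt_of_le ha hσ.1
    unfold gfun
    rw [Real.sqrt_mul hρ.le, mul_inv, ← mul_assoc, ← mul_assoc,
      mul_inv_cancel₀ hsρ, one_mul]
  rw [h1, intervalIntegral.integral_const_mul,
    intervalIntegral.integral_comp_mul_left gfun (ne_of_gt hρ), smul_eq_mul, ← mul_assoc]
  congr 1
  have h2 : ρ = Real.sqrt ρ * Real.sqrt ρ := (Real.mul_self_sqrt hρ.le).symm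
  rw [show Real.sqrt ρ * ρ⁻¹ = Real.sqrt ρ * (Real.sqrt ρ * Real.sqrt ρ)⁻¹ by rw [← h2],
    mul_inv, ← mul_assoc, mul_inv_cancel₀ hsρ, one_mul]

lemma lapPhiN_repr {N : ℝ} (hN : 1 < N) {ρ : ℝ} (hρ : 0 < ρ) :
    LaplaceT (phiN N) ρ
      = ((∫ σ in (N⁻¹)..N, (Real.sqrt σ)⁻¹ * Real.exp (-(ρ * σ)) : ℝ) : ℂ) := by
  have h0 : (0:ℝ) < N⁻¹ := by positivity
  have hinv1 : N⁻¹ ≤ 1 := by nlinarith [mul_inv_cancel₀ (show N ≠ 0 by linarith)]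
  have hle : N⁻¹ ≤ N := by linarith
  rw [LaplaceT]
  have h1 : ∀ σ : ℝ, (Real.exp (-(ρ*σ)) : ℂ) * phiN N σ
      = (((Ioo (N⁻¹) N).indicator (fun σ => (Real.sqrt σ)⁻¹ * Real.exp (-(ρ * σ))) σ : ℝ) : ℂ) := by
    intro σ
    by_cases h : σ ∈ Ioo (N⁻¹) N
    · rw [phiN, indicator_of_mem h, indicator_of_mem h]
      push_cast
      ring
    · rw [phiN, indicator_of_notMem h, indicator_of_notMem h]
      simp
  simp only [h1]
  have h2 : (∫ σ in Ioi (0:ℝ),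
        (((Ioo (N⁻¹) N).indicator (fun σ => (Real.sqrt σ)⁻¹ * Real.exp (-(ρ * σ))) σ : ℝ) : ℂ))
      = ((∫ σ in Ioi (0:ℝ),
          (Ioo (N⁻¹) N).indicator (fun σ => (Real.sqrt σ)⁻¹ * Real.exp (-(ρ * σ))) σ : ℝ) : ℂ) :=
    integral_ofReal
  rw [h2]
  congr 1
  rw [integral_indicator measurableSet_Ioo, Measure.restrict_restrict measurableSet_Ioo,
    (show Ioo (N⁻¹) N ∩ Ioi 0 = Ioo (N⁻¹) N from
      inter_eq_left.mpr fun x hx => lt_trans h0 hx.1),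
    ← integral_Ioc_eq_integral_Ioo, ← intervalIntegral.integral_of_le hle]

lemma lapPhiN_lower {N M : ℝ} (hM : 2 ≤ M) (hMN : M^2 ≤ N) {ρ : ℝ}
    (hρ1 : M/N < ρ) (hρ2 : ρ < N/M) :
    ENNReal.ofReal ((Real.sqrt ρ)⁻¹ * ∫ u in (M⁻¹)..M, gfun u)
      ≤ (‖LaplaceT (phiN N) ρ‖₊ : ℝ≥0∞) := by
  have hM0 : (0:ℝ) < M := by linarith
  have hN0 : (0:ℝ) < N := by nlinarith
  have hN1 : 1 < N := by nlinarith
  have hρ : 0 < ρ := lt_trans (by positivity) hρ1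
  have hinv1 : N⁻¹ ≤ 1 := by nlinarith [mul_inv_cancel₀ (ne_of_gt hN0)]
  have hle : N⁻¹ ≤ N := by linarith
  have hρMN : ρ * M < N := (lt_div_iff₀ hM0).mp hρ2
  have h1 : ρ * N⁻¹ ≤ M⁻¹ := by
    rw [← div_eq_mul_inv, inv_eq_one_div, div_le_div_iff₀ hN0 hM0]
    linarith
  have h2 : M⁻¹ ≤ M := by
    have : M⁻¹ ≤ 1 := by nlinarith [mul_inv_cancel₀ (ne_of_gt hM0)]
    linarith
  have h3 : M ≤ ρ * N := le_of_lt ((div_lt_iff₀ hN0).mp hρ1)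
  have hlowpos : (0:ℝ) < ρ * N⁻¹ := by positivity
  have hint : IntervalIntegrable gfun volume (ρ*N⁻¹) (ρ*N) := by
    refine (gfun_int.mono_set ?_).intervalIntegrable
    rw [uIcc_of_le (by nlinarith)]
    exact fun x hx => lt_of_lt_of_le hlowpos hx.1
  have hmono : ∫ u in (M⁻¹)..M, gfun u ≤ ∫ u in (ρ*N⁻¹)..(ρ*N), gfun u :=
    intervalIntegral.integral_mono_interval h1 h2 h3 (ae_of_all _ gfun_nonneg) hint
  rw [lapPhiN_repr hN1 hρ, Complex.nnnorm_real, ← enorm_eq_nnnorm, Real.enorm_eq_ofReal_abs]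
  refine ENNReal.ofReal_le_ofReal (le_trans ?_ (le_abs_self _))
  rw [subst_lemma hρ (by positivity) hle]
  exact mul_le_mul_of_nonneg_left hmono (by positivity)

lemma key_ineq {C : ℝ}
    (hC : ∀ φ : ℝ → ℂ, MemLp φ 2 (volume.restrict (Ioi 0)) →
        eLpNorm (LaplaceT φ) 2 (volume.restrict (Ioi 0)) ≤
          ENNReal.ofReal C * eLpNorm φ 2 (volume.restrict (Ioi 0)))
    {M N : ℝ} (hM : 2 ≤ M) (hMN : M^2 ≤ N) :
    (∫ u in (M⁻¹)..M, gfun u) * (2*Real.log N - 2*Real.log M)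
      ≤ (max C 0) * (2 * Real.log N) := by
  have hM0 : (0:ℝ) < M := by linarith
  have hN0 : (0:ℝ) < N := by nlinarith
  have hN1 : 1 < N := by nlinarith
  have hlogN : (0:ℝ) ≤ 2 * Real.log N := by
    have := Real.log_nonneg hN1.le
    linarith
  set IM := ∫ u in (M⁻¹)..M, gfun u with hIM
  have hM2 : M⁻¹ ≤ M := by
    have : M⁻¹ ≤ 1 := by nlinarith [mul_inv_cancel₀ (ne_of_gt hM0)]
    linarith
  have hIMnn : 0 ≤ IM := intervalIntegral.integral_nonneg hM2 fun u _ => gfun_nonneg u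
  have hCD : ENNReal.ofReal C = ENNReal.ofReal (max C 0) := by
    rcases le_total C 0 with h | h
    · rw [ENNReal.ofReal_eq_zero.mpr h, max_eq_right h, ENNReal.ofReal_zero]
    · rw [max_eq_left h]
  set P := ∫⁻ ρ in Ioi (0:ℝ), (‖phiN N ρ‖₊ : ℝ≥0∞) * (‖LaplaceT (phiN N) ρ‖₊ : ℝ≥0∞) with hP
  have hup : P ≤ ENNReal.ofReal (max C 0) * ENNReal.ofReal (2 * Real.log N) := by
    have hCS := lint_CS (μ := volume.restrict (Ioi 0))
      (fun ρ => (‖phiN N ρ‖₊ : ℝ≥0∞)) (fun ρ => (‖LaplaceT (phiN N) ρ‖₊ : ℝ≥0∞))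
      (phiN_meas N).enorm (lap_aesm (phiN_meas N)).enorm
    rw [← eLpNorm_two, ← eLpNorm_two] at hCS
    refine le_trans hCS ?_
    have hlap := hC (phiN N) (phiN_memLp hN1)
    rw [phiN_eLp hN1] at hlap ⊢
    calc ENNReal.ofReal (Real.sqrt (2*Real.log N)) * eLpNorm (LaplaceT (phiN N)) 2 (volume.restrict (Ioi 0))
        ≤ ENNReal.ofReal (Real.sqrt (2*Real.log N)) *
            (ENNReal.ofReal C * ENNReal.ofReal (Real.sqrt (2*Real.log N))) :=
          mul_le_mul_right hlap _
      _ = ENNReal.ofReal (max C 0) * ENNReal.ofReal (2 * Real.log N) := by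
          rw [hCD]
          rw [show ENNReal.ofReal (Real.sqrt (2*Real.log N)) *
                (ENNReal.ofReal (max C 0) * ENNReal.ofReal (Real.sqrt (2*Real.log N)))
              = ENNReal.ofReal (max C 0) * (ENNReal.ofReal (Real.sqrt (2*Real.log N)) *
                ENNReal.ofReal (Real.sqrt (2*Real.log N))) by ring,
            ← ENNReal.ofReal_mul (Real.sqrt_nonneg _), Real.mul_self_sqrt hlogN]
  have hMNlt : M/N < N/M := by
    rw [div_lt_div_iff₀ hN0 hM0]
    nlinarith
  have hlow : ENNReal.ofReal (IM * (2*Real.log N - 2*Real.log M)) ≤ P := by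
    have hsub : Ioo (M/N) (N/M) ⊆ Ioi (0:ℝ) := fun x hx => lt_trans (by positivity) hx.1
    have hPP : ∫⁻ ρ in Ioo (M/N) (N/M), (‖phiN N ρ‖₊ : ℝ≥0∞) * (‖LaplaceT (phiN N) ρ‖₊ : ℝ≥0∞) ≤ P :=
      lintegral_mono' (Measure.restrict_mono hsub le_rfl) le_rfl
    refine le_trans ?_ hPP
    have hpt : ∀ ρ ∈ Ioo (M/N) (N/M),
        ENNReal.ofReal (IM * ρ⁻¹)
          ≤ (‖phiN N ρ‖₊ : ℝ≥0∞) * (‖LaplaceT (phiN N) ρ‖₊ : ℝ≥0∞) := by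
      intro ρ hρ
      have hρ0 : 0 < ρ := hsub hρ
      have hmem : ρ ∈ Ioo (N⁻¹) N := by
        constructor
        · refine lt_trans ?_ hρ.1
          rw [inv_eq_one_div, div_lt_div_iff₀ hN0 hN0]
          nlinarith
        · refine lt_trans hρ.2 ?_
          rw [div_lt_iff₀ hM0]
          nlinarith
      have hφ : (‖phiN N ρ‖₊ : ℝ≥0∞) = ENNReal.ofReal ((Real.sqrt ρ)⁻¹) := by
        rw [phiN, indicator_of_mem hmem, Complex.nnnorm_real,
          ← enorm_eq_nnnorm, Real.enorm_eq_ofReal (by positivity)]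
      have hL := lapPhiN_lower hM hMN hρ.1 hρ.2
      rw [← hIM] at hL
      calc ENNReal.ofReal (IM * ρ⁻¹)
          = ENNReal.ofReal ((Real.sqrt ρ)⁻¹) * ENNReal.ofReal ((Real.sqrt ρ)⁻¹ * IM) := by
            rw [← ENNReal.ofReal_mul (by positivity)]
            congr 1
            rw [show (Real.sqrt ρ)⁻¹ * ((Real.sqrt ρ)⁻¹ * IM)
                = ((Real.sqrt ρ)⁻¹ * (Real.sqrt ρ)⁻¹) * IM by ring,
              ← mul_inv, Real.mul_self_sqrt hρ0.le]
            ring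
        _ ≤ (‖phiN N ρ‖₊ : ℝ≥0∞) * (‖LaplaceT (phiN N) ρ‖₊ : ℝ≥0∞) := by
            rw [hφ]
            exact mul_le_mul_right hL _
    have heq : ∫⁻ ρ in Ioo (M/N) (N/M), ENNReal.ofReal (IM * ρ⁻¹)
        = ENNReal.ofReal (IM * (2*Real.log N - 2*Real.log M)) := by
      have hint : IntegrableOn (fun ρ : ℝ => IM * ρ⁻¹) (Ioo (M/N) (N/M)) :=
        (inv_integrableOn_Ioo (by positivity)).const_mul IM
      rw [← ofReal_integral_eq_lintegral_ofReal hint ?_]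
      · congr 1
        rw [MeasureTheory.integral_const_mul]
        congr 1
        rw [← integral_Ioc_eq_integral_Ioo, ← intervalIntegral.integral_of_le hMNlt.le,
          integral_inv (notMem_uIcc_of_lt (by positivity) (by positivity)),
          Real.log_div (by positivity) (by positivity),
          Real.log_div (by positivity) (by positivity),
          Real.log_div (by positivity) (by positivity)]
        ring
      · filter_upwards [ae_restrict_mem measurableSet_Ioo] with ρ hρ
        have : 0 < ρ := hsub hρ
        positivity
    rw [← heq]
    refine lintegral_mono_ae ?_
    filter_upwards [ae_restrict_mem measurableSet_Ioo] with ρ hρ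
    exact hpt ρ hρ
  have := le_trans hlow hup
  rw [← ENNReal.ofReal_mul (le_max_right C 0)] at this
  exact (ENNReal.ofReal_le_ofReal_iff (by positivity)).mp this

lemma sharp {C : ℝ}
    (hC : ∀ φ : ℝ → ℂ, MemLp φ 2 (volume.restrict (Ioi 0)) →
        eLpNorm (LaplaceT φ) 2 (volume.restrict (Ioi 0)) ≤
          ENNReal.ofReal C * eLpNorm φ 2 (volume.restrict (Ioi 0))) :
    Real.sqrt π ≤ C := by
  set D := max C 0 with hD
  have hD0 : 0 ≤ D := le_max_right C 0
  have hmain : Real.sqrt π ≤ D := by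
    refine le_of_forall_pos_le_add fun ε hε => ?_
    obtain ⟨M, hM2, hIM0⟩ := exists_M (show (0:ℝ) < ε/2 by linarith)
    have hM0 : (0:ℝ) < M := by linarith
    have hMinv : M⁻¹ ≤ M := by
      have : M⁻¹ ≤ 1 := by nlinarith [mul_inv_cancel₀ (ne_of_gt hM0)]
      linarith
    set I := ∫ u in (M⁻¹)..M, gfun u with hI
    have hIM : Real.sqrt π - ε/2 < I := by
      rw [hI, intervalIntegral.integral_of_le hMinv]
      exact hIM0
    have hInn : 0 ≤ I := intervalIntegral.integral_nonneg hMinv fun u _ => gfun_nonneg u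
    have hlogM : 0 < Real.log M := Real.log_pos (by linarith)
    set K := 2 * I * Real.log M / (ε/2) + 1 with hK
    have hKnn : 1 ≤ K := by
      have h0 : 0 ≤ 2 * I * Real.log M / (ε/2) := by positivity
      exact le_add_of_nonneg_left h0
    set N := max (M^2) (Real.exp K) with hN
    have hMN : M^2 ≤ N := le_max_left _ _
    have hN4 : 4 ≤ N := by nlinarith
    have hN0 : (0:ℝ) < N := by linarith
    have hlogNK : K ≤ Real.log N := by
      rw [Real.le_log_iff_exp_le hN0]
      exact le_max_right _ _
    have hlogN : 0 < Real.log N := lt_of_lt_of_le (by linarith) hlogNK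
    have hkey := key_ineq hC hM2 hMN
    rw [← hI, ← hD] at hkey
    rcases le_or_gt I D with h | h
    · linarith
    · have hd1 : (I - D) * (2*Real.log N) ≤ I * (2*Real.log M) := by nlinarith
      have hd2 : I - D ≤ I * (2*Real.log M) / (2*Real.log N) :=
        (le_div_iff₀ (by linarith)).mpr hd1
      have hd3 : I * (2*Real.log M) / (2*Real.log N) ≤ ε/2 := by
        rw [div_le_iff₀ (by linarith)]
        have hc : ε/2 * (2*I*Real.log M/(ε/2)) = 2*I*Real.log M := by
          field_simp
        nlinarith [mul_le_mul_of_nonneg_left hlogNK (show (0:ℝ) ≤ ε/2 by linarith)]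
      linarith
  rcases max_cases C 0 with ⟨h1, _⟩ | ⟨h1, h2⟩
  · rwa [← h1]
  · exfalso
    have hpos : 0 < Real.sqrt π := Real.sqrt_pos.mpr Real.pi_pos
    rw [hD] at hmain
    rw [h1] at hmain
    linarith


/-- The Laplace transform is bounded and self-adjoint on `L²((0,∞))` with norm `√π`,
and `L² = H`. -/
theorem laplace_bounded_selfAdjoint_sq_eq_hankel :
    (∀ φ : ℝ → ℂ, MemLp φ 2 (volume.restrict (Ioi 0)) →
      MemLp (LaplaceT φ) 2 (volume.restrict (Ioi 0)) ∧
      eLpNorm (LaplaceT φ) 2 (volume.restrict (Ioi 0)) ≤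
        ENNReal.ofReal (Real.sqrt Real.pi) * eLpNorm φ 2 (volume.restrict (Ioi 0))) ∧
    (∀ φ ψ : ℝ → ℂ, MemLp φ 2 (volume.restrict (Ioi 0)) →
      MemLp ψ 2 (volume.restrict (Ioi 0)) →
      (∫ ρ in Ioi (0:ℝ), LaplaceT φ ρ * (starRingEnd ℂ) (ψ ρ)) =
      ∫ ρ in Ioi (0:ℝ), φ ρ * (starRingEnd ℂ) (LaplaceT ψ ρ)) ∧
    (∀ C : ℝ, (∀ φ : ℝ → ℂ, MemLp φ 2 (volume.restrict (Ioi 0)) →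
        eLpNorm (LaplaceT φ) 2 (volume.restrict (Ioi 0)) ≤
          ENNReal.ofReal C * eLpNorm φ 2 (volume.restrict (Ioi 0))) →
      Real.sqrt Real.pi ≤ C) ∧
    (∀ φ : ℝ → ℂ, MemLp φ 2 (volume.restrict (Ioi 0)) →
      ∀ ρ ∈ Ioi (0:ℝ), LaplaceT (LaplaceT φ) ρ = Hankel φ ρ) := by
  exact ⟨fun φ hφ => lap_bound hφ,
    fun φ ψ hφ hψ => lap_selfadj hφ hψ,
    fun C hC => sharp hC,
    fun φ hφ ρ hρ => lap_sq_eq_hankel hφ hρ⟩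
end
end

section
/- For any a ∈ ℝ and t ∈ ℝ, the limit as ε → 0⁺ of ∫_t^∞ cos(ar) e^{−εr} dr equals, in the sense of tempered distributions in a, π δ₀(a) − sin(ta)/a. -/
open MeasureTheory Filter Set Topology

noncomputable section

lemma inner_eq (t a : ℝ) {ε : ℝ} (hε : 0 < ε) :
    (∫ r in Ioi t, Real.cos (a * r) * Real.exp (-(ε * r)))
      = Real.exp (-(ε * t)) * ((ε * Real.cos (a * t) - a * Real.sin (t * a)) / (ε ^ 2 + a ^ 2)) := by
  have hD : (0:ℝ) < ε ^ 2 + a ^ 2 := by positivity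
  set F : ℝ → ℝ := fun r =>
    Real.exp (-(ε * r)) * (a * Real.sin (a * r) - ε * Real.cos (a * r)) / (ε ^ 2 + a ^ 2) with hF
  have hderiv : ∀ r : ℝ, HasDerivAt F (Real.cos (a * r) * Real.exp (-(ε * r))) r := by
    intro r
    have h1 : HasDerivAt (fun r : ℝ => Real.exp (-(ε * r))) (-ε * Real.exp (-(ε * r))) r := by
      have := (((hasDerivAt_id r).const_mul ε).neg).exp
      convert this using 1
      show -ε * Real.exp (-(ε * r)) = Real.exp (-(ε * r)) * -(ε * 1)
      ring
      rfl
    have h2 : HasDerivAt (fun r : ℝ => Real.sin (a * r)) (a * Real.cos (a * r)) r := by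
      have := ((hasDerivAt_id r).const_mul a).sin
      simpa [mul_comm] using this
    have h3 : HasDerivAt (fun r : ℝ => Real.cos (a * r)) (-(a * Real.sin (a * r))) r := by
      have := ((hasDerivAt_id r).const_mul a).cos
      simpa [mul_comm] using this
    have h4 := ((h1.mul (((h2.const_mul a)).sub (h3.const_mul ε)))).div_const (ε ^ 2 + a ^ 2)
    refine h4.congr_deriv ?_
    show (-ε * Real.exp (-(ε * r)) * (a * Real.sin (a * r) - ε * Real.cos (a * r)) + Real.exp (-(ε * r)) * (a * (a * Real.cos (a * r)) - ε * -(a * Real.sin (a * r)))) / (ε ^ 2 + a ^ 2) = _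
    rw [div_eq_iff hD.ne']
    ring
  have hint : IntegrableOn (fun r => Real.cos (a * r) * Real.exp (-(ε * r))) (Ioi t) := by
    refine ((exp_neg_integrableOn_Ioi t hε)).mono' ?_ ?_
    · exact (Continuous.mul (Real.continuous_cos.comp (continuous_const.mul continuous_id))
        (Real.continuous_exp.comp ((continuous_const.mul continuous_id).neg))).aestronglyMeasurable
    · filter_upwards with r
      rw [norm_mul, Real.norm_eq_abs, Real.norm_eq_abs, Real.abs_exp, neg_mul]
      exact mul_le_of_le_one_left (Real.exp_nonneg _) (Real.abs_cos_le_one _)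
  have htend : Tendsto F atTop (𝓝 0) := by
    have hb : Tendsto (fun r : ℝ => Real.exp (-(ε * r))) atTop (𝓝 0) := by
      refine Real.tendsto_exp_atBot.comp ?_
      exact tendsto_neg_atBot_iff.mpr (tendsto_id.const_mul_atTop hε)
    have : Tendsto (fun r : ℝ => ((|a| + ε) / (ε ^ 2 + a ^ 2)) * Real.exp (-(ε * r))) atTop (𝓝 0) := by
      simpa using hb.const_mul ((|a| + ε) / (ε ^ 2 + a ^ 2))
    refine squeeze_zero_norm (fun r => ?_) this
    rw [hF]
    simp only [Real.norm_eq_abs, abs_div, abs_of_pos hD, abs_mul, Real.abs_exp]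
    rw [div_le_iff₀ hD]
    have hs : |a * Real.sin (a * r)| ≤ |a| := by
      rw [abs_mul]
      exact mul_le_of_le_one_right (abs_nonneg a) (Real.abs_sin_le_one _)
    have hc : |ε * Real.cos (a * r)| ≤ ε := by
      rw [abs_mul, abs_of_pos hε]
      exact mul_le_of_le_one_right hε.le (Real.abs_cos_le_one _)
    have : |a * Real.sin (a * r) - ε * Real.cos (a * r)| ≤ |a| + ε :=
      (abs_sub _ _).trans (add_le_add hs hc)
    calc Real.exp (-(ε * r)) * |a * Real.sin (a * r) - ε * Real.cos (a * r)|
        ≤ Real.exp (-(ε * r)) * (|a| + ε) := by gcongr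
      _ = (|a| + ε) / (ε ^ 2 + a ^ 2) * Real.exp (-(ε * r)) * (ε ^ 2 + a ^ 2) := by
          field_simp
  have := integral_Ioi_of_hasDerivAt_of_tendsto
    (f := F) (f' := fun r => Real.cos (a * r) * Real.exp (-(ε * r)))
    ((hderiv t).continuousAt.continuousWithinAt) (fun x _ => hderiv x) hint htend
  rw [this, hF]
  rw [mul_comm t a]
  field_simp
  ring

lemma poisson_limit (g : ℝ → ℂ) (hg : Continuous g) (C : ℝ) (hC : ∀ x, ‖g x‖ ≤ C) :
    Tendsto (fun ε : ℝ => ∫ a : ℝ, (ε / (ε ^ 2 + a ^ 2)) • g a) (𝓝[>] (0:ℝ))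
      (𝓝 ((Real.pi : ℝ) • g 0)) := by
  have key : ∀ ε ∈ Ioi (0:ℝ), (∫ a : ℝ, (ε / (ε ^ 2 + a ^ 2)) • g a)
      = ∫ u : ℝ, ((1 + u ^ 2)⁻¹ : ℝ) • g (ε * u) := by
    intro ε hε
    rw [mem_Ioi] at hε
    have h1 := MeasureTheory.Measure.integral_comp_mul_left
      (fun a => (ε / (ε ^ 2 + a ^ 2)) • g a) ε
    have h2 : ∀ u : ℝ, (ε / (ε ^ 2 + (ε * u) ^ 2)) • g (ε * u)
        = ε⁻¹ • (((1 + u ^ 2)⁻¹ : ℝ) • g (ε * u)) := by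
      intro u
      rw [smul_smul]
      congr 1
      field_simp
    simp only [h2] at h1
    rw [integral_smul, abs_of_pos (inv_pos.mpr hε)] at h1
    have := congrArg (fun z => (ε : ℝ) • z) h1
    simp only [smul_smul, mul_inv_cancel₀ hε.ne', one_smul] at this
    exact this.symm
  have hlim : Tendsto (fun ε : ℝ => ∫ u : ℝ, ((1 + u ^ 2)⁻¹ : ℝ) • g (ε * u)) (𝓝[>] (0:ℝ))
      (𝓝 ((Real.pi : ℝ) • g 0)) := by
    have hπ : (Real.pi : ℝ) • g 0 = ∫ u : ℝ, ((1 + u ^ 2)⁻¹ : ℝ) • g 0 := by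
      rw [integral_smul_const, integral_univ_inv_one_add_sq]
    rw [hπ]
    refine tendsto_integral_filter_of_dominated_convergence
      (fun u => C * (1 + u ^ 2)⁻¹) ?_ ?_ (integrable_inv_one_add_sq.const_mul C) ?_
    · filter_upwards with ε
      exact (((continuous_const.add (continuous_id.pow 2)).inv₀
        (fun u => (by positivity : (0:ℝ) < 1 + u ^ 2).ne')).smul (hg.comp (continuous_const.mul continuous_id))).aestronglyMeasurable
    · filter_upwards with ε
      filter_upwards with u
      rw [norm_smul, Real.norm_eq_abs, abs_of_pos (by positivity : (0:ℝ) < (1 + u ^ 2)⁻¹), mul_comm]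
      gcongr
      exact hC _
    · filter_upwards with u
      have h0 : Tendsto (fun ε : ℝ => ε * u) (𝓝[>] (0:ℝ)) (𝓝 0) := by
        have := (continuous_mul_right u).tendsto (0:ℝ)
        simpa using this.mono_left nhdsWithin_le_nhds
      exact ((hg.tendsto 0).comp h0).const_smul _
  exact hlim.congr' (eventually_nhdsWithin_of_forall (fun ε hε => (key ε hε).symm)) |>.congr
    (fun ε => rfl) |>.mono_left le_rfl |>.congr' (Eventually.of_forall fun _ => rfl)

lemma partB (t : ℝ) (φ : SchwartzMap ℝ ℂ) :
    Tendsto (fun ε : ℝ => ∫ a : ℝ, ((a * Real.sin (t * a)) / (ε ^ 2 + a ^ 2)) • φ a)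
      (𝓝[>] (0:ℝ)) (𝓝 (∫ a : ℝ, (Real.sin (t * a) / a) • φ a)) := by
  have hbound : ∀ ε : ℝ, ∀ a : ℝ, |(a * Real.sin (t * a)) / (ε ^ 2 + a ^ 2)| ≤ |t| := by
    intro ε a
    rcases eq_or_ne a 0 with rfl | ha
    · simp
    have hD : (0:ℝ) < ε ^ 2 + a ^ 2 := by positivity
    rw [abs_div, abs_of_pos hD, div_le_iff₀ hD]
    have h1 : |a * Real.sin (t * a)| ≤ |t| * a ^ 2 := by
      rw [abs_mul]
      calc |a| * |Real.sin (t * a)| ≤ |a| * |t * a| := by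
            exact mul_le_mul_of_nonneg_left Real.abs_sin_le_abs (abs_nonneg a)
        _ = |t| * a ^ 2 := by rw [abs_mul, ← sq_abs]; ring
    refine h1.trans ?_
    have : a ^ 2 ≤ ε ^ 2 + a ^ 2 := by nlinarith [sq_nonneg ε]
    exact mul_le_mul_of_nonneg_left this (abs_nonneg t)
  refine tendsto_integral_filter_of_dominated_convergence
    (fun a => |t| * ‖φ a‖) ?_ ?_ (φ.integrable.norm.const_mul |t|) ?_
  · filter_upwards [self_mem_nhdsWithin] with ε (hε : (0:ℝ) < ε)
    have : Continuous fun a : ℝ => (a * Real.sin (t * a)) / (ε ^ 2 + a ^ 2) := by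
      apply Continuous.div
      · exact continuous_id.mul (Real.continuous_sin.comp (continuous_const.mul continuous_id))
      · exact continuous_const.add (continuous_id.pow 2)
      · intro a; positivity
    exact (this.smul φ.continuous).aestronglyMeasurable
  · filter_upwards with ε
    filter_upwards with a
    rw [norm_smul, Real.norm_eq_abs]
    exact mul_le_mul_of_nonneg_right (hbound ε a) (norm_nonneg _)
  · have h0 : ∀ᵐ a : ℝ, a ≠ 0 := by
      refine eventually_of_mem (compl_mem_ae_iff.2 (measure_singleton (0:ℝ))) ?_
      intro a ha
      simpa using ha
    filter_upwards [h0] with a ha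
    have hden : Tendsto (fun ε : ℝ => ε ^ 2 + a ^ 2) (𝓝[>] (0:ℝ)) (𝓝 (a ^ 2)) := by
      have hc : Continuous fun ε : ℝ => ε ^ 2 + a ^ 2 :=
        (continuous_id.pow 2).add continuous_const
      have := hc.tendsto (0:ℝ)
      simpa using this.mono_left nhdsWithin_le_nhds
    have : Tendsto (fun ε : ℝ => (a * Real.sin (t * a)) / (ε ^ 2 + a ^ 2)) (𝓝[>] (0:ℝ))
        (𝓝 (Real.sin (t * a) / a)) := by
      have := (tendsto_const_nhds (x := a * Real.sin (t * a)) (f := 𝓝[>] (0:ℝ))).div hden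
        (by positivity)
      rw [show a * Real.sin (t * a) / a ^ 2 = Real.sin (t * a) / a by
        rw [pow_two, mul_div_mul_left _ _ ha]] at this
      exact this
    exact this.smul_const (φ a)

lemma integrable_smul_phi (f : ℝ → ℝ) (hf : Continuous f) (C : ℝ) (hC : ∀ a, |f a| ≤ C)
    (φ : SchwartzMap ℝ ℂ) : Integrable (fun a => f a • φ a) := by
  refine (φ.integrable.norm.const_mul C).mono'
    ((hf.smul φ.continuous).aestronglyMeasurable) ?_
  filter_upwards with a
  rw [norm_smul, Real.norm_eq_abs]
  exact mul_le_mul_of_nonneg_right (hC a) (norm_nonneg _)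

lemma phi_bdd (φ : SchwartzMap ℝ ℂ) : ∃ C : ℝ, ∀ x : ℝ, ‖φ x‖ ≤ C := by
  obtain ⟨C, hC⟩ := φ.decay 0 0
  exact ⟨C, fun x => by simpa using hC.2 x⟩

/-- In the sense of tempered distributions in `a`,
`lim_{ε→0⁺} ∫_t^∞ cos(ar) e^{−εr} dr = π δ₀(a) − sin(ta)/a`:
pairing with any Schwartz function `φ` and letting `ε → 0⁺` yields
`π φ(0) − ∫ (sin(ta)/a) φ(a) da`. -/
theorem cos_exp_tail_distributional_limit (t : ℝ) (φ : SchwartzMap ℝ ℂ) :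
    Tendsto (fun ε : ℝ =>
        ∫ a : ℝ, (∫ r in Ioi t, Real.cos (a * r) * Real.exp (-(ε * r))) • φ a)
      (𝓝[>] 0)
      (𝓝 ((Real.pi : ℂ) * φ 0 - ∫ a : ℝ, ((Real.sin (t * a) / a : ℝ) : ℂ) * φ a)) := by
  set g : ℝ → ℂ := fun a => Real.cos (a * t) • φ a with hg
  obtain ⟨C, hC⟩ := phi_bdd φ
  have hgC : ∀ x, ‖g x‖ ≤ max C 0 := by
    intro x
    rw [hg]
    simp only [norm_smul, Real.norm_eq_abs]
    calc |Real.cos (x * t)| * ‖φ x‖ ≤ 1 * ‖φ x‖ :=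
          mul_le_mul_of_nonneg_right (Real.abs_cos_le_one _) (norm_nonneg _)
      _ = ‖φ x‖ := one_mul _
      _ ≤ max C 0 := (hC x).trans (le_max_left _ _)
  have hgcont : Continuous g :=
    (Real.continuous_cos.comp (continuous_id.mul continuous_const)).smul φ.continuous
  have hA := poisson_limit g hgcont (max C 0) hgC
  have hB := partB t φ
  have hexp : Tendsto (fun ε : ℝ => Real.exp (-(ε * t))) (𝓝[>] (0:ℝ)) (𝓝 1) := by
    have hc : Continuous fun ε : ℝ => Real.exp (-(ε * t)) :=
      Real.continuous_exp.comp ((continuous_id.mul continuous_const).neg)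
    have := hc.tendsto (0:ℝ)
    simpa using this.mono_left nhdsWithin_le_nhds
  have hmain := hexp.smul (hA.sub hB)
  have heq : (1:ℝ) • ((Real.pi : ℝ) • g 0 - ∫ a : ℝ, (Real.sin (t * a) / a) • φ a)
      = (Real.pi : ℂ) * φ 0 - ∫ a : ℝ, ((Real.sin (t * a) / a : ℝ) : ℂ) * φ a := by
    rw [one_smul]
    have h1 : (Real.pi : ℝ) • g 0 = (Real.pi : ℂ) * φ 0 := by
      rw [hg]; simp [Complex.real_smul]
    have h2 : (∫ a : ℝ, (Real.sin (t * a) / a) • φ a)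
        = ∫ a : ℝ, ((Real.sin (t * a) / a : ℝ) : ℂ) * φ a :=
      integral_congr_ae (Eventually.of_forall fun a => by simp only [Complex.real_smul])
    rw [h1, h2]
  rw [heq] at hmain
  refine hmain.congr' ?_
  filter_upwards [self_mem_nhdsWithin] with ε (hε : (0:ℝ) < ε)
  have hD : ∀ a : ℝ, (0:ℝ) < ε ^ 2 + a ^ 2 := fun a => by positivity
  -- integrability of the two pieces
  have hfA : Integrable (fun a : ℝ => (ε / (ε ^ 2 + a ^ 2)) • g a) := by
    have hcont : Continuous fun a : ℝ => ε / (ε ^ 2 + a ^ 2) * Real.cos (a * t) := by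
      exact (continuous_const.div (continuous_const.add (continuous_id.pow 2))
        (fun a => (hD a).ne')).mul
        (Real.continuous_cos.comp (continuous_id.mul continuous_const))
    have := integrable_smul_phi _ hcont (1 / ε) (fun a => ?_) φ
    · refine this.congr (Eventually.of_forall fun a => ?_)
      simp only [hg, smul_smul]
    · rw [abs_mul, abs_div, abs_of_pos hε, abs_of_pos (hD a)]
      calc ε / (ε ^ 2 + a ^ 2) * |Real.cos (a * t)| ≤ ε / (ε ^ 2 + a ^ 2) * 1 :=
            mul_le_mul_of_nonneg_left (Real.abs_cos_le_one _) (by positivity)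
        _ = ε / (ε ^ 2 + a ^ 2) := mul_one _
        _ ≤ 1 / ε := by
            rw [div_le_div_iff₀ (hD a) hε]
            nlinarith [sq_nonneg a]
  have hfB : Integrable (fun a : ℝ => ((a * Real.sin (t * a)) / (ε ^ 2 + a ^ 2)) • φ a) := by
    refine integrable_smul_phi _ ?_ |t| (fun a => ?_) φ
    · exact (continuous_id.mul (Real.continuous_sin.comp
        (continuous_const.mul continuous_id))).div
        (continuous_const.add (continuous_id.pow 2)) (fun a => (hD a).ne')
    · rcases eq_or_ne a 0 with rfl | ha
      · simp
      rw [abs_div, abs_of_pos (hD a), div_le_iff₀ (hD a)]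
      have h1 : |a * Real.sin (t * a)| ≤ |t| * a ^ 2 := by
        rw [abs_mul]
        calc |a| * |Real.sin (t * a)| ≤ |a| * |t * a| :=
              mul_le_mul_of_nonneg_left Real.abs_sin_le_abs (abs_nonneg a)
          _ = |t| * a ^ 2 := by rw [abs_mul, ← sq_abs]; ring
      refine h1.trans ?_
      have : a ^ 2 ≤ ε ^ 2 + a ^ 2 := by nlinarith [sq_nonneg ε]
      exact mul_le_mul_of_nonneg_left this (abs_nonneg t)
  -- now rewrite the integral
  calc Real.exp (-(ε * t)) • ((∫ a : ℝ, (ε / (ε ^ 2 + a ^ 2)) • g a)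
          - ∫ a : ℝ, ((a * Real.sin (t * a)) / (ε ^ 2 + a ^ 2)) • φ a)
      = Real.exp (-(ε * t)) • ∫ a : ℝ, ((ε / (ε ^ 2 + a ^ 2)) • g a
          - ((a * Real.sin (t * a)) / (ε ^ 2 + a ^ 2)) • φ a) := by
        rw [integral_sub hfA hfB]
    _ = ∫ a : ℝ, (Real.exp (-(ε * t)) *
          ((ε * Real.cos (a * t) - a * Real.sin (t * a)) / (ε ^ 2 + a ^ 2))) • φ a := by
        rw [← integral_smul]
        refine integral_congr_ae (Eventually.of_forall fun a => ?_)
        simp only [hg, smul_sub, smul_smul, ← sub_smul]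
        congr 1
        field_simp
    _ = ∫ a : ℝ, (∫ r in Ioi t, Real.cos (a * r) * Real.exp (-(ε * r))) • φ a := by
        refine integral_congr_ae (Eventually.of_forall fun a => ?_)
        simp only [inner_eq t a hε]
end
end

section
/- For any a ≠ 0 and t ∈ ℝ, the limit as ε → 0⁺ of ∫_t^∞ sin(ar) e^{−εr} dr equals cos(ta)/a. -/
open MeasureTheory Filter Set Topology

noncomputable section

lemma sin_exp_integral_eval (a t : ℝ) (ha : a ≠ 0) {ε : ℝ} (hε : 0 < ε) :
    ∫ r in Ioi t, Real.sin (a * r) * Real.exp (-(ε * r)) =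
      Real.exp (-(ε * t)) * (ε * Real.sin (a * t) + a * Real.cos (a * t)) / (ε ^ 2 + a ^ 2) := by
  have hd : ε ^ 2 + a ^ 2 ≠ 0 := by positivity
  set F : ℝ → ℝ := fun r =>
    -(Real.exp (-(ε * r)) * (ε * Real.sin (a * r) + a * Real.cos (a * r))) / (ε ^ 2 + a ^ 2)
    with hF
  have hderiv : ∀ x ∈ Ici t, HasDerivAt F (Real.sin (a * x) * Real.exp (-(ε * x))) x := by
    intro x _
    have h1 : HasDerivAt (fun r => Real.exp (-(ε * r))) (-ε * Real.exp (-(ε * x))) x := by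
      simpa [neg_mul, mul_comm] using ((hasDerivAt_id x).const_mul (-ε)).exp
    have h2 : HasDerivAt (fun r => ε * Real.sin (a * r) + a * Real.cos (a * r))
        (ε * (a * Real.cos (a * x)) + a * (-(a * Real.sin (a * x)))) x := by
      have hs : HasDerivAt (fun r => Real.sin (a * r)) (Real.cos (a * x) * a) x :=
        (Real.hasDerivAt_sin (a * x)).comp x (by simpa using (hasDerivAt_id x).const_mul a)
      have hc : HasDerivAt (fun r => Real.cos (a * r)) (-Real.sin (a * x) * a) x :=
        (Real.hasDerivAt_cos (a * x)).comp x (by simpa using (hasDerivAt_id x).const_mul a)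
      have := ((hs.const_mul ε).add (hc.const_mul a) :
        HasDerivAt (fun r => ε * Real.sin (a * r) + a * Real.cos (a * r)) _ x)
      exact this.congr_deriv (by ring)
    have := ((h1.mul h2).neg.div_const (ε ^ 2 + a ^ 2) : HasDerivAt F _ x)
    refine this.congr_deriv ?_
    field_simp
    ring
  have hint : IntegrableOn (fun r => Real.sin (a * r) * Real.exp (-(ε * r))) (Ioi t) := by
    have hb : IntegrableOn (fun r => Real.exp (-(ε * r))) (Ioi t) :=
      by simpa [neg_mul] using exp_neg_integrableOn_Ioi t hε
    refine Integrable.mono hb ?_ ?_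
    · exact Continuous.aestronglyMeasurable (by fun_prop)
    · filter_upwards with x
      rw [Real.norm_eq_abs, Real.norm_eq_abs, abs_mul, Real.abs_exp]
      calc |Real.sin (a * x)| * Real.exp (-(ε * x))
          ≤ 1 * Real.exp (-(ε * x)) := by
            gcongr; exact Real.abs_sin_le_one _
        _ = Real.exp (-(ε * x)) := one_mul _
  have htop : Tendsto F atTop (𝓝 0) := by
    have h1 : Tendsto (fun r => Real.exp (-(ε * r))) atTop (𝓝 0) := by
      have := Real.tendsto_exp_atBot.comp (tendsto_neg_atTop_atBot.comp
        (tendsto_id.const_mul_atTop hε : Tendsto (fun r : ℝ => ε * r) atTop atTop))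
      simpa [Function.comp_def] using this
    have hbd : ∀ r : ℝ, |F r| ≤ (ε + |a|) / (ε ^ 2 + a ^ 2) * Real.exp (-(ε * r)) := by
      intro r
      rw [hF]
      simp only [abs_div, abs_neg, abs_mul, Real.abs_exp, abs_of_pos (show (0:ℝ) < ε ^ 2 + a ^ 2 by positivity)]
      rw [div_mul_eq_mul_div, div_le_div_iff_of_pos_right (by positivity)]
      rw [mul_comm (ε + |a|)]
      gcongr
      calc |ε * Real.sin (a * r) + a * Real.cos (a * r)|
          ≤ |ε * Real.sin (a * r)| + |a * Real.cos (a * r)| := abs_add_le _ _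
        _ ≤ ε * 1 + |a| * 1 := by
            rw [abs_mul, abs_mul, abs_of_pos hε]
            gcongr
            exacts [Real.abs_sin_le_one _, Real.abs_cos_le_one _]
        _ = ε + |a| := by ring
    have h2 : Tendsto (fun r => (ε + |a|) / (ε ^ 2 + a ^ 2) * Real.exp (-(ε * r))) atTop (𝓝 0) := by
      simpa using h1.const_mul ((ε + |a|) / (ε ^ 2 + a ^ 2))
    refine squeeze_zero_norm (fun r => ?_) h2
    simpa [Real.norm_eq_abs] using hbd r
  have := integral_Ioi_of_hasDerivAt_of_tendsto' hderiv hint htop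
  rw [this, hF]
  ring

/-- For `a ≠ 0` and any `t`, `lim_{ε→0⁺} ∫_t^∞ sin(ar) e^{−εr} dr = cos(ta)/a`. -/
theorem sin_exp_tail_limit (a t : ℝ) (ha : a ≠ 0) :
    Tendsto (fun ε : ℝ => ∫ r in Ioi t, Real.sin (a * r) * Real.exp (-(ε * r)))
      (𝓝[>] 0) (𝓝 (Real.cos (t * a) / a)) := by
  have key : Tendsto (fun ε : ℝ =>
      Real.exp (-(ε * t)) * (ε * Real.sin (a * t) + a * Real.cos (a * t)) / (ε ^ 2 + a ^ 2))
      (𝓝[>] 0) (𝓝 (Real.cos (t * a) / a)) := by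
    have hc : ContinuousAt (fun ε : ℝ =>
        Real.exp (-(ε * t)) * (ε * Real.sin (a * t) + a * Real.cos (a * t)) / (ε ^ 2 + a ^ 2)) 0 := by
      apply ContinuousAt.div
      · fun_prop
      · fun_prop
      · simpa using pow_ne_zero 2 ha
    have h0 : (fun ε : ℝ =>
        Real.exp (-(ε * t)) * (ε * Real.sin (a * t) + a * Real.cos (a * t)) / (ε ^ 2 + a ^ 2)) 0
        = Real.cos (t * a) / a := by
      simp [mul_comm t a]
      field_simp
    rw [← h0]
    exact hc.continuousWithinAt.tendsto
  refine key.congr' ?_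
  filter_upwards [self_mem_nhdsWithin] with ε hε
  exact (sin_exp_integral_eval a t ha hε).symm
end
end
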